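/- Let A₁ = P₁ − R₁ + S₁ be a convergent double weak splitting of type II of a symmetric nonsingular matrix A₁ ∈ ℝ^{n×n}, with iteration matrix W̃₁ = [[(R₁P₁⁻¹)ᵀ, −(S₁P₁⁻¹)ᵀ],[I, 0]], and let A₂ = P₂ − R₂ + S₂ be a convergent double weak splitting of type I of a symmetric nonsingular matrix A₂ ∈ ℝ^{n×n}, with iteration matrix Ŵ₂ = [[P₂⁻¹R₂, −P₂⁻¹S₂],[I, 0]]. If P₂⁻¹R₂ ≤ (R₁P₁⁻¹)ᵀ and P₂⁻¹A₂ ≤ (P₁⁻¹)ᵀA₁, then ρ(W̃₁) ≤ ρ(Ŵ₂) < 1. -/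

import Mathlib

open Matrix Filter Topology

/-- The spectral radius of a real square matrix: the maximum (supremum) of the
moduli of its complex eigenvalues. -/
noncomputable def specRad {n : Type*} [Fintype n] [DecidableEq n]
    (B : Matrix n n ℝ) : ℝ :=
  sSup ((fun z : ℂ => ‖z‖) '' spectrum ℂ (B.map Complex.ofReal))

/-- Entrywise order on real matrices: `entryLE A B` means every entry of `A` is
at most the corresponding entry of `B`. -/
def entryLE {m n : Type*} (A B : Matrix m n ℝ) : Prop :=
  ∀ i j, A i j ≤ B i j

/-- `X` is the Moore–Penrose inverse of `A`. -/
def IsMoorePenrose {m n : Type*} [Fintype m] [Fintype n]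
    (A : Matrix m n ℝ) (X : Matrix n m ℝ) : Prop :=
  A * X * A = A ∧ X * A * X = X ∧ (A * X)ᵀ = A * X ∧ (X * A)ᵀ = X * A

/-- Iteration matrix of a double weak splitting of type II:
`W̃ = [[(RP⁻¹)ᵀ, −(SP⁻¹)ᵀ],[I, 0]]`. -/
noncomputable def itMatII {n : Type*} [Fintype n] [DecidableEq n]
    (P R S : Matrix n n ℝ) : Matrix (n ⊕ n) (n ⊕ n) ℝ :=
  Matrix.fromBlocks ((R * P⁻¹)ᵀ) (-((S * P⁻¹)ᵀ)) 1 0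

/-- Iteration matrix of a double weak splitting of type I:
`Ŵ = [[P⁻¹R, −P⁻¹S],[I, 0]]`. -/
noncomputable def itMatI {n : Type*} [Fintype n] [DecidableEq n]
    (P R S : Matrix n n ℝ) : Matrix (n ⊕ n) (n ⊕ n) ℝ :=
  Matrix.fromBlocks (P⁻¹ * R) (-(P⁻¹ * S)) 1 0

section AuxSR
attribute [local instance] Matrix.linftyOpNormedRing Matrix.linftyOpNormedAlgebra

variable {m : Type*} [Fintype m] [DecidableEq m]

lemma specRad_empty [IsEmpty m] (B : Matrix m m ℝ) : specRad B = 0 := by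
  have h : spectrum ℂ (B.map Complex.ofReal) = ∅ := by
    ext z
    simp only [spectrum.mem_iff, Set.mem_empty_iff_false, iff_false, not_not]
    rw [Matrix.isUnit_iff_isUnit_det, Matrix.det_isEmpty]
    exact isUnit_one
  simp [specRad, h, Real.sSup_empty]

lemma exists_eigen [Nonempty m] (B : Matrix m m ℝ) :
    ∃ (lam : ℂ) (v : m → ℂ), v ≠ 0 ∧ (B.map Complex.ofReal) *ᵥ v = lam • v ∧
      ‖lam‖ = specRad B := by
  have hne : (spectrum ℂ (B.map Complex.ofReal)).Nonempty := spectrum.nonempty _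
  have hfin := Matrix.finite_spectrum (R := ℂ) (B.map Complex.ofReal)
  have h1 : specRad B ∈ (fun z : ℂ => ‖z‖) '' spectrum ℂ (B.map Complex.ofReal) :=
    (hne.image _).csSup_mem (hfin.image _)
  obtain ⟨lam, hlam, habs⟩ := h1
  rw [spectrum.mem_iff, Matrix.isUnit_iff_isUnit_det, isUnit_iff_ne_zero, not_not] at hlam
  obtain ⟨v, hv, h2⟩ := (Matrix.exists_mulVec_eq_zero_iff).mpr hlam
  refine ⟨lam, v, hv, ?_, habs⟩
  rw [Matrix.sub_mulVec, Algebra.algebraMap_eq_smul_one, Matrix.smul_mulVec,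
    Matrix.one_mulVec, sub_eq_zero] at h2
  exact h2.symm

lemma abs_le_specRad (B : Matrix m m ℝ) {lam : ℂ}
    (h : lam ∈ spectrum ℂ (B.map Complex.ofReal)) : ‖lam‖ ≤ specRad B :=
  le_csSup ((Matrix.finite_spectrum _).image _).bddAbove (Set.mem_image_of_mem _ h)

lemma specRad_nonneg [Nonempty m] (B : Matrix m m ℝ) : 0 ≤ specRad B := by
  obtain ⟨lam, h⟩ := spectrum.nonempty (B.map Complex.ofReal)
  exact le_trans (norm_nonneg lam) (abs_le_specRad B h)

lemma entry_pow_nonneg {B : Matrix m m ℝ} (hB : ∀ i j, 0 ≤ B i j) (k : ℕ) :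
    ∀ i j, 0 ≤ (B ^ k) i j := by
  induction k with
  | zero => intro i j; by_cases h : i = j <;> simp [Matrix.one_apply, h]
  | succ k ih =>
    intro i j
    rw [pow_succ, Matrix.mul_apply]
    exact Finset.sum_nonneg fun l _ => mul_nonneg (ih i l) (hB l j)

lemma mulVec_mono {B : Matrix m m ℝ} (hB : ∀ i j, 0 ≤ B i j) {a b : m → ℝ}
    (hab : ∀ j, a j ≤ b j) : ∀ i, (B *ᵥ a) i ≤ (B *ᵥ b) i := by
  intro i
  simp only [Matrix.mulVec, dotProduct]
  exact Finset.sum_le_sum fun j _ => mul_le_mul_of_nonneg_left (hab j) (hB i j)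

lemma cw_bound (B : Matrix m m ℝ) (hB : ∀ i j, 0 ≤ B i j)
    (x : m → ℝ) (hx : ∀ i, 0 ≤ x i) (i₀ : m) (hx0 : 0 < x i₀)
    (ρ : ℝ) (hρ : 0 ≤ ρ) (hle : ∀ i, ρ * x i ≤ (B *ᵥ x) i) :
    ρ ≤ specRad B := by
  have hnem : Nonempty m := ⟨i₀⟩
  by_contra hcon
  push_neg at hcon
  have hρpos : 0 < ρ := lt_of_le_of_lt (specRad_nonneg B) hcon
  -- iterated inequality
  have hiter : ∀ k : ℕ, ∀ i, ρ ^ k * x i ≤ ((B ^ k) *ᵥ x) i := by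
    intro k
    induction k with
    | zero => intro i; simp [Matrix.one_mulVec]
    | succ k ih =>
      intro i
      have h1 : (B ^ (k+1)) *ᵥ x = (B ^ k) *ᵥ (B *ᵥ x) := by
        rw [Matrix.mulVec_mulVec, ← pow_succ]
      calc ρ ^ (k+1) * x i = ρ * (ρ ^ k * x i) := by ring
        _ ≤ ρ * ((B ^ k) *ᵥ x) i := mul_le_mul_of_nonneg_left (ih i) hρ
        _ = ((B ^ k) *ᵥ (ρ • x)) i := by rw [Matrix.mulVec_smul]; simp
        _ ≤ ((B ^ k) *ᵥ (B *ᵥ x)) i :=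
            mulVec_mono (entry_pow_nonneg hB k) (fun j => by simpa using hle j) i
        _ = ((B ^ (k+1)) *ᵥ x) i := by rw [h1]
  -- norms: ‖(B^k).map ofReal‖ = ‖B^k‖
  set M := B.map Complex.ofReal with hMdef
  have hmap : ∀ k : ℕ, M ^ k = (B ^ k).map Complex.ofReal := by
    intro k
    have := map_pow (Complex.ofRealHom.mapMatrix : Matrix m m ℝ →+* Matrix m m ℂ) B k
    exact this.symm
  have hnorm : ∀ k : ℕ, ‖M ^ k‖ = ‖B ^ k‖ := by
    intro k
    rw [hmap k]
    have : ‖(B ^ k).map Complex.ofReal‖₊ = ‖B ^ k‖₊ := by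
      simp only [Matrix.linfty_opNNNorm_def, Matrix.map_apply]
      congr 1; ext i; congr 1; ext j
      simp [Complex.nnnorm_real]
    exact congrArg NNReal.toReal this
  -- spectral radius bound
  have h1 : spectralRadius ℂ M ≤ ENNReal.ofReal (specRad B) := by
    rw [spectralRadius]
    apply iSup₂_le
    intro lam hlam
    rw [← ENNReal.ofReal_coe_nnreal, coe_nnnorm]
    exact ENNReal.ofReal_le_ofReal
      (by simpa using abs_le_specRad B hlam)
  set ρ' := (specRad B + ρ) / 2 with hρ'def
  have hsB := specRad_nonneg B
  have hρ'pos : 0 < ρ' := by simp only [hρ'def]; linarith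
  have hρ'lt : ρ' < ρ := by simp only [hρ'def]; linarith
  have h2 : spectralRadius ℂ M < ENNReal.ofReal ρ' :=
    lt_of_le_of_lt h1 ((ENNReal.ofReal_lt_ofReal_iff hρ'pos).mpr (by simp only [hρ'def]; linarith))
  have h3 := spectrum.pow_norm_pow_one_div_tendsto_nhds_spectralRadius M
  have h4 : ∀ᶠ k : ℕ in atTop,
      ENNReal.ofReal (‖M ^ k‖ ^ (1/(k:ℝ))) < ENNReal.ofReal ρ' :=
    h3.eventually_lt_const h2
  have h5 : ∀ᶠ k : ℕ in atTop, ‖B ^ k‖ ≤ ρ' ^ k := by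
    filter_upwards [h4, eventually_ge_atTop 1] with k hk hk1
    have hlt : ‖M ^ k‖ ^ (1/(k:ℝ)) < ρ' := by
      rwa [ENNReal.ofReal_lt_ofReal_iff hρ'pos] at hk
    have hkey : ‖M ^ k‖ = (‖M ^ k‖ ^ (1/(k:ℝ))) ^ k := by
      rw [one_div, Real.rpow_inv_natCast_pow (norm_nonneg _) (by omega)]
    calc ‖B ^ k‖ = ‖M ^ k‖ := (hnorm k).symm
      _ = (‖M ^ k‖ ^ (1/(k:ℝ))) ^ k := hkey
      _ ≤ ρ' ^ k := pow_le_pow_left₀ (Real.rpow_nonneg (norm_nonneg _) _) hlt.le k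
  have h6 : ∀ᶠ k : ℕ in atTop, ρ ^ k * x i₀ ≤ ρ' ^ k * ‖x‖ := by
    filter_upwards [h5] with k hk
    calc ρ ^ k * x i₀ ≤ ((B ^ k) *ᵥ x) i₀ := hiter k i₀
      _ ≤ |((B ^ k) *ᵥ x) i₀| := le_abs_self _
      _ ≤ ‖(B ^ k) *ᵥ x‖ := by
          rw [← Real.norm_eq_abs]; exact norm_le_pi_norm _ i₀
      _ ≤ ‖B ^ k‖ * ‖x‖ := Matrix.linfty_opNorm_mulVec _ _
      _ ≤ ρ' ^ k * ‖x‖ := mul_le_mul_of_nonneg_right hk (norm_nonneg x)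
  have hgt1 : 1 < ρ / ρ' := (one_lt_div hρ'pos).mpr hρ'lt
  have h8 : ∀ᶠ k : ℕ in atTop, ‖x‖ / x i₀ < (ρ/ρ') ^ k :=
    (tendsto_pow_atTop_atTop_of_one_lt hgt1).eventually_gt_atTop _
  obtain ⟨k, hk6, hk8⟩ := (h6.and h8).exists
  rw [div_pow, div_lt_div_iff₀ hx0 (pow_pos hρ'pos k)] at hk8
  linarith
end AuxSR


theorem stmt14 {n : ℕ} (A₁ P₁ R₁ S₁ A₂ P₂ R₂ S₂ : Matrix (Fin n) (Fin n) ℝ)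
    (hAsym₁ : A₁ᵀ = A₁) (hAinv₁ : IsUnit A₁.det)
    (hAsym₂ : A₂ᵀ = A₂) (hAinv₂ : IsUnit A₂.det)
    -- `A₁ = P₁ − R₁ + S₁` is a double weak splitting of type II
    (hsplit₁ : A₁ = P₁ - R₁ + S₁) (hPinv₁ : IsUnit P₁.det)
    (hRP₁ : entryLE 0 (R₁ * P₁⁻¹)) (hSP₁ : entryLE 0 (-(S₁ * P₁⁻¹)))
    -- `A₂ = P₂ − R₂ + S₂` is a double weak splitting of type I
    (hsplit₂ : A₂ = P₂ - R₂ + S₂) (hPinv₂ : IsUnit P₂.det)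
    (hRP₂ : entryLE 0 (P₂⁻¹ * R₂)) (hSP₂ : entryLE 0 (-(P₂⁻¹ * S₂)))
    -- both splittings are convergent
    (hconv₁ : specRad (itMatII P₁ R₁ S₁) < 1)
    (hconv₂ : specRad (itMatI P₂ R₂ S₂) < 1)
    -- `P₂⁻¹R₂ ≤ (R₁P₁⁻¹)ᵀ` and `P₂⁻¹A₂ ≤ (P₁⁻¹)ᵀA₁`
    (hR : entryLE (P₂⁻¹ * R₂) ((R₁ * P₁⁻¹)ᵀ))
    (hAP : entryLE (P₂⁻¹ * A₂) ((P₁⁻¹)ᵀ * A₁)) :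
    specRad (itMatII P₁ R₁ S₁) ≤ specRad (itMatI P₂ R₂ S₂) ∧
      specRad (itMatI P₂ R₂ S₂) < 1 := by
  refine ⟨?_, hconv₂⟩
  rcases isEmpty_or_nonempty (Fin n) with hn | hn
  · rw [specRad_empty, specRad_empty]
  · obtain ⟨lam, v, hv, hev, habs⟩ := exists_eigen (itMatII P₁ R₁ S₁)
    set ρ := specRad (itMatII P₁ R₁ S₁) with hρdef
    have hρnn : 0 ≤ ρ := habs ▸ norm_nonneg lam
    have hρlt1 : ρ < 1 := hconv₁
    set F₁ := (R₁ * P₁⁻¹)ᵀ with hF₁def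
    set G₁ := -((S₁ * P₁⁻¹)ᵀ) with hG₁def
    set F₂ := P₂⁻¹ * R₂ with hF₂def
    set G₂ := -(P₂⁻¹ * S₂) with hG₂def
    have hF₁nn : ∀ i j, 0 ≤ F₁ i j := fun i j => by
      have := hRP₁ j i
      simp only [Matrix.zero_apply] at this
      simpa only [hF₁def, Matrix.transpose_apply] using this
    have hG₁nn : ∀ i j, 0 ≤ G₁ i j := fun i j => by
      have := hSP₁ j i
      simp only [Matrix.zero_apply, Matrix.neg_apply] at this
      simpa only [hG₁def, Matrix.neg_apply, Matrix.transpose_apply] using this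
    have hF₂nn : ∀ i j, 0 ≤ F₂ i j := fun i j => by
      have := hRP₂ i j
      simpa only [Matrix.zero_apply] using this
    have hG₂nn : ∀ i j, 0 ≤ G₂ i j := fun i j => by
      have := hSP₂ i j
      simpa only [Matrix.zero_apply] using this
    have hP₂e : P₂⁻¹ * A₂ = 1 - F₂ - G₂ := by
      rw [hsplit₂, Matrix.mul_add, Matrix.mul_sub, Matrix.nonsing_inv_mul _ hPinv₂,
        hF₂def, hG₂def]
      noncomm_ring
    have hP₁e : (P₁⁻¹)ᵀ * A₁ = 1 - F₁ - G₁ := by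
      have h1 : (P₁⁻¹)ᵀ * A₁ = ((P₁ - R₁ + S₁) * P₁⁻¹)ᵀ := by
        rw [Matrix.transpose_mul, ← hsplit₁, hAsym₁]
      rw [h1, Matrix.add_mul, Matrix.sub_mul, Matrix.mul_nonsing_inv _ hPinv₁,
        Matrix.transpose_add, Matrix.transpose_sub, Matrix.transpose_one, hF₁def, hG₁def]
      noncomm_ring
    have hkey : ∀ i j, F₁ i j + G₁ i j ≤ F₂ i j + G₂ i j := by
      intro i j
      have h := hAP i j
      rw [hP₂e, hP₁e] at h
      simp only [Matrix.sub_apply, Matrix.one_apply] at h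
      split at h <;> linarith
    have hW₁ : itMatII P₁ R₁ S₁ = Matrix.fromBlocks F₁ G₁ 1 0 := by
      rw [hF₁def, hG₁def]; rfl
    have hE1 : ∀ i, (∑ j, (F₁ i j : ℂ) * v (Sum.inl j)) +
        (∑ j, (G₁ i j : ℂ) * v (Sum.inr j)) = lam * v (Sum.inl i) := by
      intro i
      have h := congrFun hev (Sum.inl i)
      rw [hW₁] at h
      simpa [Matrix.mulVec, dotProduct, Fintype.sum_sum_type, Matrix.map_apply,
        Pi.smul_apply, smul_eq_mul] using h
    have hE2 : ∀ i, v (Sum.inl i) = lam * v (Sum.inr i) := by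
      intro i
      have h := congrFun hev (Sum.inr i)
      rw [hW₁] at h
      simpa [Matrix.mulVec, dotProduct, Fintype.sum_sum_type, Matrix.map_apply,
        Matrix.one_apply, Pi.smul_apply, smul_eq_mul, apply_ite, ite_mul,
        Finset.sum_ite_eq] using h
    have hw : ∃ j₀, v (Sum.inr j₀) ≠ 0 := by
      by_contra hcon
      push_neg at hcon
      apply hv
      funext i
      cases i with
      | inl i => rw [hE2 i, hcon i, mul_zero]; rfl
      | inr i => exact hcon i
    obtain ⟨j₀, hj₀⟩ := hw
    set x : Fin n → ℝ := fun i => ‖v (Sum.inr i)‖ with hxdef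
    have hxnn : ∀ i, 0 ≤ x i := fun i => norm_nonneg _
    have hx0 : 0 < x j₀ := norm_pos_iff.mpr hj₀
    have habsu : ∀ j, ‖v (Sum.inl j)‖ = ρ * x j := by
      intro j
      rw [hE2 j, norm_mul, habs]
    have hcent : ∀ i, ρ * (ρ * x i) ≤ ∑ j, (ρ * F₁ i j + G₁ i j) * x j := by
      intro i
      calc ρ * (ρ * x i) = ‖lam‖ * ‖v (Sum.inl i)‖ := by
            rw [habsu i, habs]
        _ = ‖lam * v (Sum.inl i)‖ := (norm_mul _ _).symm
        _ = ‖(∑ j, (F₁ i j : ℂ) * v (Sum.inl j)) +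
              ∑ j, (G₁ i j : ℂ) * v (Sum.inr j)‖ := by rw [hE1 i]
        _ ≤ ‖∑ j, (F₁ i j : ℂ) * v (Sum.inl j)‖ +
              ‖∑ j, (G₁ i j : ℂ) * v (Sum.inr j)‖ := norm_add_le _ _
        _ ≤ (∑ j, ‖(F₁ i j : ℂ) * v (Sum.inl j)‖) +
              ∑ j, ‖(G₁ i j : ℂ) * v (Sum.inr j)‖ :=
            add_le_add (norm_sum_le _ _) (norm_sum_le _ _)
        _ = ∑ j, (ρ * F₁ i j + G₁ i j) * x j := by
            rw [← Finset.sum_add_distrib]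
            apply Finset.sum_congr rfl
            intro j _
            rw [norm_mul, norm_mul, habsu j, Complex.norm_real, Complex.norm_real, Real.norm_eq_abs, Real.norm_eq_abs,
              abs_of_nonneg (hF₁nn i j), abs_of_nonneg (hG₁nn i j)]
            ring
    set W₂ := itMatI P₂ R₂ S₂ with hW₂def
    have hW₂blocks : W₂ = Matrix.fromBlocks F₂ G₂ 1 0 := by
      rw [hW₂def, hF₂def, hG₂def]; rfl
    have hW₂nn : ∀ i j, 0 ≤ W₂ i j := by
      intro i j
      rw [hW₂blocks]
      cases i with
      | inl i =>
        cases j with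
        | inl j => simpa using hF₂nn i j
        | inr j => simpa using hG₂nn i j
      | inr i =>
        cases j with
        | inl j => rcases eq_or_ne i j with h | h <;> simp [Matrix.one_apply, h]
        | inr j => simp
    set z : Fin n ⊕ Fin n → ℝ := Sum.elim (fun i => ρ * x i) x with hzdef
    have hznn : ∀ i, 0 ≤ z i := by
      intro i
      cases i with
      | inl i => exact mul_nonneg hρnn (hxnn i)
      | inr i => exact hxnn i
    have hmulz1 : ∀ i, (W₂ *ᵥ z) (Sum.inl i) =
        (∑ j, F₂ i j * (ρ * x j)) + ∑ j, G₂ i j * x j := by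
      intro i
      rw [hW₂blocks]
      simp [Matrix.mulVec, dotProduct, Fintype.sum_sum_type, hzdef]
    have hmulz2 : ∀ i, (W₂ *ᵥ z) (Sum.inr i) = ρ * x i := by
      intro i
      rw [hW₂blocks]
      simp [Matrix.mulVec, dotProduct, Fintype.sum_sum_type, hzdef,
        Matrix.one_apply, ite_mul, Finset.sum_ite_eq]
    have hmain : ∀ i, ρ * z i ≤ (W₂ *ᵥ z) i := by
      intro i
      cases i with
      | inr i => rw [hmulz2 i]; simp [hzdef]
      | inl i =>
        rw [hmulz1 i]
        show ρ * (ρ * x i) ≤ _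
        calc ρ * (ρ * x i) ≤ ∑ j, (ρ * F₁ i j + G₁ i j) * x j := hcent i
          _ ≤ ∑ j, (ρ * F₂ i j + G₂ i j) * x j := by
              apply Finset.sum_le_sum
              intro j _
              apply mul_le_mul_of_nonneg_right _ (hxnn j)
              have h1 := hkey i j
              have h2 := hR i j
              have h3 : 0 ≤ (1 - ρ) * (F₁ i j - F₂ i j) :=
                mul_nonneg (by linarith) (by linarith)
              nlinarith [h1, h2, h3]
          _ = (∑ j, F₂ i j * (ρ * x j)) + ∑ j, G₂ i j * x j := by
              rw [← Finset.sum_add_distrib]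
              apply Finset.sum_congr rfl
              intro j _
              ring
    exact cw_bound W₂ hW₂nn z hznn (Sum.inr j₀) hx0 ρ hρnn hmain
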